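/- The trigonometric polynomial p(θ) = 2 + 2cos θ satisfies: limsup_{θ→0} p(π - θ)²/f(θ) < ∞, where f(θ) = (1/240)(160 - 60cos θ - 96cos 2θ - 4cos 3θ), and p(θ)² + p(π - θ)² > 0 for all θ ∈ [0,π]. -/
import Mathlib


open Real

/-- The IgA symbol `f(θ) = (1/240)(160 - 60 cos θ - 96 cos 2θ - 4 cos 3θ)`. -/
noncomputable def fIgA (θ : ℝ) : ℝ :=
  (1 / 240) * (160 - 60 * Real.cos θ - 96 * Real.cos (2 * θ) - 4 * Real.cos (3 * θ))

/-- The projector symbol `p(θ) = 2 + 2 cos θ`. -/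
noncomputable def pProj (θ : ℝ) : ℝ := 2 + 2 * Real.cos θ

/-- Two-grid approximation-property conditions: `p(π-θ)²/f(θ)` is bounded near `θ = 0`
(finite limsup) and `p(θ)² + p(π-θ)² > 0` on `[0,π]`. -/
theorem projector_conditions :
    (∃ C : ℝ, ∀ᶠ θ in nhdsWithin (0:ℝ) {(0:ℝ)}ᶜ, (pProj (π - θ)) ^ 2 / fIgA θ ≤ C) ∧
    ∀ θ ∈ Set.Icc (0:ℝ) π, 0 < (pProj θ) ^ 2 + (pProj (π - θ)) ^ 2 := by
  constructor
  · refine ⟨30, ?_⟩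
    filter_upwards [self_mem_nhdsWithin,
      nhdsWithin_le_nhds (Ioo_mem_nhds (by norm_num : (-1:ℝ) < 0) (by norm_num : (0:ℝ) < 1))]
      with θ hθ hθI
    have hpi : (1:ℝ) < π := by linarith [Real.pi_gt_three]
    have hne : θ ≠ 0 := hθ
    have hc1 : Real.cos θ < 1 := by
      rcases lt_or_eq_of_le (Real.cos_le_one θ) with h | h
      · exact h
      · exact absurd ((Real.cos_eq_one_iff_of_lt_of_lt (by linarith [hθI.1])
          (by linarith [hθI.2])).1 h) hne
    have hcm1 : -1 ≤ Real.cos θ := Real.neg_one_le_cos θ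
    set c := Real.cos θ with hc
    have hf : fIgA θ = (1 - c) * (c ^ 2 + 13 * c + 16) / 15 := by
      unfold fIgA
      rw [Real.cos_two_mul, show (3:ℝ) * θ = 3 * θ from rfl, Real.cos_three_mul]
      ring
    have hquad : (0:ℝ) < c ^ 2 + 13 * c + 16 := by nlinarith
    have h1c : 0 < 1 - c := by linarith
    have hfpos : 0 < fIgA θ := by
      rw [hf]; exact div_pos (mul_pos h1c hquad) (by norm_num)
    have hp : pProj (π - θ) = 2 - 2 * c := by
      unfold pProj; rw [Real.cos_pi_sub]; ring
    rw [hp, div_le_iff₀ hfpos, hf]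
    nlinarith [mul_nonneg (mul_nonneg h1c.le (by linarith : (0:ℝ) ≤ c + 1)) (by linarith : (0:ℝ) ≤ c + 14)]
  · intro θ hθ
    have := Real.neg_one_le_cos θ
    have := Real.cos_le_one θ
    unfold pProj
    rw [Real.cos_pi_sub]
    nlinarith [sq_nonneg (Real.cos θ)]
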